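/- Let K be a field of characteristic p > 0 and let σ ∈ K with σ ≠ 0. In the formal power series ring K[[ε]], let ρ0 be the power series whose coefficient of ε^n equals −σ^(1−p·n) (i.e. −σ·(σ^(−p))^n) if n = p^i for some integer i ≥ 0, and equals 0 otherwise; equivalently, ρ0 = −σ·Σ_{i≥0} (ε/σ^p)^(p^i). Then ρ0 satisfies ρ0^p − σ^(p−1)·ρ0 − ε = 0, i.e. ρ0 is a root of the polynomial Z^p − σ^(p−1)·Z − ε over K[[ε]]. -/

import Mathlib

lemma coeff_pow_char' {K : Type*} [Field K] (p : ℕ) (hp : p.Prime) [CharP K p]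
    (f : PowerSeries K) (n : ℕ) :
    PowerSeries.coeff n (f ^ p) =
      if p ∣ n then (PowerSeries.coeff (n / p) f) ^ p else 0 := by
  haveI : Fact p.Prime := ⟨hp⟩
  haveI : ExpChar K p := ExpChar.prime hp
  set P : Polynomial K := PowerSeries.trunc (n + 1) f with hP
  have h1 : PowerSeries.coeff n (f ^ p) = (P ^ p).coeff n := by
    calc PowerSeries.coeff n (f ^ p)
        = (PowerSeries.trunc (n + 1) (f ^ p)).coeff n := by
          rw [PowerSeries.coeff_trunc, if_pos (Nat.lt_succ_self n)]
      _ = (PowerSeries.trunc (n + 1) ((P : PowerSeries K) ^ p)).coeff n := by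
          rw [PowerSeries.trunc_trunc_pow]
      _ = PowerSeries.coeff n ((P : PowerSeries K) ^ p) := by
          rw [PowerSeries.coeff_trunc, if_pos (Nat.lt_succ_self n)]
      _ = PowerSeries.coeff n ((P ^ p : Polynomial K) : PowerSeries K) := by push_cast; rfl
      _ = (P ^ p).coeff n := Polynomial.coeff_coe _ _
  rw [h1, ← Polynomial.map_frobenius_expand (p := p) P, Polynomial.coeff_map,
    Polynomial.coeff_expand hp.pos]
  split_ifs with h
  · rw [frobenius_def]
    congr 1
    rw [hP, PowerSeries.coeff_trunc,
      if_pos (lt_of_le_of_lt (Nat.div_le_self n p) (Nat.lt_succ_self n))]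
  · rw [map_zero]


open Classical in
/-- The power series `ρ0 = -σ·Σ_{i≥0} (ε/σ^p)^(p^i)`, whose coefficient of `ε^n` is
`-σ·(σ^(-p))^n` if `n = p^i` for some `i ≥ 0` and `0` otherwise. -/
noncomputable def rho0 (p : ℕ) (K : Type*) [Field K] (σ : K) : PowerSeries K :=
  PowerSeries.mk fun n => if ∃ i : ℕ, n = p ^ i then -(σ * ((σ ^ p)⁻¹) ^ n) else 0

/-- `ρ0` is a root of `Z^p - σ^(p-1)·Z - ε` over `K[[ε]]`. -/
theorem stmt17 (p : ℕ) (hp : p.Prime) (K : Type*) [Field K] [CharP K p]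
    (σ : K) (hσ : σ ≠ 0) :
    rho0 p K σ ^ p - (PowerSeries.C σ) ^ (p - 1) * rho0 p K σ - PowerSeries.X = 0 := by
  haveI : Fact p.Prime := ⟨hp⟩
  haveI : ExpChar K p := ExpChar.prime hp
  have hσp : σ ^ p ≠ 0 := pow_ne_zero _ hσ
  have hpow : σ ^ (p - 1) * σ = σ ^ p := by
    rw [← pow_succ, Nat.sub_add_cancel hp.one_le]
  rw [sub_sub, sub_eq_zero]
  ext n
  rw [← map_pow (PowerSeries.C (R := K)) σ (p - 1), coeff_pow_char' p hp, map_add,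
    PowerSeries.coeff_C_mul, PowerSeries.coeff_X]
  simp only [rho0, PowerSeries.coeff_mk]
  rcases Nat.lt_or_ge n 2 with h2 | h2
  · interval_cases n
    · have h0 : ¬ ∃ i : ℕ, 0 = p ^ i := by
        rintro ⟨i, hi⟩; exact (pow_ne_zero i hp.pos.ne') hi.symm
      simp [h0, hp.pos.ne', zero_pow hp.pos.ne']
    · have h1 : ∃ i : ℕ, 1 = p ^ i := ⟨0, by simp⟩
      have hnd : ¬ p ∣ 1 := by simp [Nat.dvd_one, hp.ne_one]
      rw [if_neg hnd, if_pos h1, if_pos rfl]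
      rw [pow_one, mul_neg, ← mul_assoc, hpow, mul_inv_cancel₀ hσp]
      ring
  · have hn1 : n ≠ 1 := by omega
    rw [if_neg hn1, add_zero]
    by_cases hdvd : p ∣ n
    · rw [if_pos hdvd]
      obtain ⟨m, rfl⟩ := hdvd
      have hm : m ≠ 0 := by rintro rfl; omega
      have hmn : p * m / p = m := Nat.mul_div_cancel_left m hp.pos
      rw [hmn]
      have hiff : (∃ i : ℕ, m = p ^ i) ↔ (∃ i : ℕ, p * m = p ^ i) := by
        constructor
        · rintro ⟨i, rfl⟩; exact ⟨i + 1, (pow_succ' p i).symm⟩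
        · rintro ⟨i, hi⟩
          cases i with
          | zero => rw [pow_zero] at hi; exact absurd hi hn1
          | succ j =>
            refine ⟨j, ?_⟩
            have := hi
            rw [pow_succ'] at this
            exact Nat.eq_of_mul_eq_mul_left hp.pos this
      by_cases hm2 : ∃ i : ℕ, m = p ^ i
      · rw [if_pos hm2, if_pos (hiff.mp hm2)]
        rw [neg_pow, neg_one_pow_char K p, mul_pow, ← pow_mul, mul_comm m p, ← hpow]
        ring
      · rw [if_neg hm2, if_neg (fun h => hm2 (hiff.mpr h)), zero_pow hp.pos.ne', mul_zero]
    · rw [if_neg hdvd]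
      have hnp : ¬ ∃ i : ℕ, n = p ^ i := by
        rintro ⟨i, rfl⟩
        cases i with
        | zero => simp at hn1
        | succ j => exact hdvd ⟨p ^ j, by rw [pow_succ']⟩
      rw [if_neg hnp, mul_zero]
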